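/- Let G be a real polynomial with only real zeros and deg G ≥ n ≥ 1, A > 0, a₁,…,aₙ > 0, and ω₁,…,ωₙ Hermite-Biehler polynomials. Define Hₙ(s, z) = Σ_{S⊆{1,…,n}} G(s - Σ_{k∉S} iaₖ + Σ_{ℓ∈S} ia_ℓ) Π_{k∉S} ωₖ*(z) Π_{ℓ∈S} ω_ℓ(z). Then: (i) every zero z of z ↦ Hₙ(iA, z) satisfies Im z > 0; (ii) every zero of z ↦ Hₙ(-iA, z) satisfies Im z < 0; (iii) every zero of z ↦ Hₙ(0, z) is real. -/

import Mathlib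

open Complex Polynomial Finset


private lemma factor_le {w r : ℂ} {b : ℝ} (hb : 0 < b) (h : 0 ≤ w.im - r.im) :
    ‖w - I * b - r‖ ≤ ‖w + I * b - r‖ := by
  rw [Complex.norm_def, Complex.norm_def]
  apply Real.sqrt_le_sqrt
  simp only [Complex.normSq_apply, Complex.sub_re, Complex.add_re, Complex.mul_re,
    Complex.sub_im, Complex.add_im, Complex.mul_im, Complex.I_re, Complex.I_im,
    Complex.ofReal_re, Complex.ofReal_im]
  nlinarith [hb, h]

private lemma factor_lt {w r : ℂ} {b : ℝ} (hb : 0 < b) (h : 0 < w.im - r.im) :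
    ‖w - I * b - r‖ < ‖w + I * b - r‖ := by
  rw [Complex.norm_def, Complex.norm_def]
  apply Real.sqrt_lt_sqrt (Complex.normSq_nonneg _)
  simp only [Complex.normSq_apply, Complex.sub_re, Complex.add_re, Complex.mul_re,
    Complex.sub_im, Complex.add_im, Complex.mul_im, Complex.I_re, Complex.I_im,
    Complex.ofReal_re, Complex.ofReal_im]
  nlinarith [hb, h]

private lemma ms_prod_le (m : Multiset ℂ) (w1 w2 : ℂ)
    (h : ∀ r ∈ m, ‖w1 - r‖ ≤ ‖w2 - r‖) :
    (m.map fun r => ‖w1 - r‖).prod ≤ (m.map fun r => ‖w2 - r‖).prod := by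
  induction m using Multiset.induction_on with
  | empty => simp
  | cons r m ih =>
    simp only [Multiset.map_cons, Multiset.prod_cons]
    have h1 := h r (Multiset.mem_cons_self r m)
    have h2 : ∀ x ∈ m, ‖w1 - x‖ ≤ ‖w2 - x‖ :=
      fun x hx => h x (Multiset.mem_cons_of_mem hx)
    exact mul_le_mul h1 (ih h2) (Multiset.prod_nonneg (by
      intro x hx
      obtain ⟨y, _, rfl⟩ := Multiset.mem_map.1 hx
      exact norm_nonneg _)) (norm_nonneg _)

private lemma ms_prod_lt (m : Multiset ℂ) (hm : m ≠ 0) (w1 w2 : ℂ)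
    (h : ∀ r ∈ m, ‖w1 - r‖ < ‖w2 - r‖) :
    (m.map fun r => ‖w1 - r‖).prod < (m.map fun r => ‖w2 - r‖).prod := by
  obtain ⟨r0, hr0⟩ := Multiset.exists_mem_of_ne_zero hm
  rw [← Multiset.cons_erase hr0]
  set m' := m.erase r0 with hm'
  simp only [Multiset.map_cons, Multiset.prod_cons]
  have hsub : ∀ x ∈ m', ‖w1 - x‖ < ‖w2 - x‖ :=
    fun x hx => h x (Multiset.mem_of_mem_erase hx)
  have hP2pos : 0 < (m'.map fun r => ‖w2 - r‖).prod := by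
    apply Multiset.prod_pos
    intro x hx
    obtain ⟨y, hy, rfl⟩ := Multiset.mem_map.1 hx
    exact lt_of_le_of_lt (norm_nonneg _) (hsub y hy)
  calc ‖w1 - r0‖ * (m'.map fun r => ‖w1 - r‖).prod
      ≤ ‖w1 - r0‖ * (m'.map fun r => ‖w2 - r‖).prod := by
        apply mul_le_mul_of_nonneg_left (ms_prod_le _ _ _ fun x hx => le_of_lt (hsub x hx))
          (norm_nonneg _)
    _ < ‖w2 - r0‖ * (m'.map fun r => ‖w2 - r‖).prod := by
        apply mul_lt_mul_of_pos_right (h r0 hr0) hP2pos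



private lemma abs_eval_factored (f : Polynomial ℂ) (v : ℂ) :
    ‖f.eval v‖
      = ‖f.leadingCoeff‖ * ((f.roots.map fun r => ‖v - r‖).prod) := by
  have hsplit : f.Splits := IsAlgClosed.splits f
  conv_lhs => rw [hsplit.eq_prod_roots]
  rw [eval_mul, eval_C, norm_mul, eval_multiset_prod, Multiset.map_map]
  congr 1
  rw [show ∀ m : Multiset ℂ, ‖m.prod‖ = (m.map (‖·‖)).prod from
    fun m => map_multiset_prod (normHom : ℂ →*₀ ℝ) m, Multiset.map_map]
  congr 1
  ext r
  simp

private lemma abs_eval_le (f : Polynomial ℂ)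
    (hroots : ∀ ρ : ℂ, f.eval ρ = 0 → ρ.im ≤ 0) (w : ℂ) (hw : 0 ≤ w.im)
    {b : ℝ} (hb : 0 < b) :
    ‖f.eval (w - I * b)‖ ≤ ‖f.eval (w + I * b)‖ := by
  rcases eq_or_ne f 0 with rfl | hf
  · simp
  rw [abs_eval_factored, abs_eval_factored]
  apply mul_le_mul_of_nonneg_left ?_ (norm_nonneg _)
  apply ms_prod_le
  intro r hr
  have hr0 : f.eval r = 0 := (Polynomial.mem_roots'.1 hr).2
  exact factor_le hb (by linarith [hroots r hr0])

private lemma abs_eval_lt (f : Polynomial ℂ) (hf : f ≠ 0) (hdeg : 1 ≤ f.natDegree)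
    (hroots : ∀ ρ : ℂ, f.eval ρ = 0 → ρ.im ≤ 0) (w : ℂ) (hw : 0 < w.im)
    {b : ℝ} (hb : 0 < b) :
    ‖f.eval (w - I * b)‖ < ‖f.eval (w + I * b)‖ := by
  rw [abs_eval_factored, abs_eval_factored]
  apply mul_lt_mul_of_pos_left ?_ (norm_pos_iff.2 (Polynomial.leadingCoeff_ne_zero.2 hf))
  have hdeg' : f.degree ≠ 0 := by
    have := Polynomial.natDegree_pos_iff_degree_pos.1 (by omega : 0 < f.natDegree)
    exact ne_of_gt this
  obtain ⟨ρ0, hρ0⟩ := IsAlgClosed.exists_root f hdeg'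
  have hmem : ρ0 ∈ f.roots := Polynomial.mem_roots'.2 ⟨hf, hρ0⟩
  apply ms_prod_lt _ (fun h0 => by rw [h0] at hmem; simp at hmem)
  intro r hr
  have hr0 : f.eval r = 0 := (Polynomial.mem_roots'.1 hr).2
  exact factor_lt hb (by linarith [hroots r hr0])


noncomputable def Tpoly (c u : ℂ) (f : Polynomial ℂ) : Polynomial ℂ :=
  f.comp (X + C c) + C u * f.comp (X - C c)

lemma Tpoly_eval (c u : ℂ) (f : Polynomial ℂ) (w : ℂ) :
    (Tpoly c u f).eval w = f.eval (w + c) + u * f.eval (w - c) := by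
  simp [Tpoly, eval_comp]

lemma comp_add_eq_taylor (c : ℂ) (f : Polynomial ℂ) : f.comp (X + C c) = taylor c f :=
  (taylor_apply c f).symm

lemma comp_sub_eq_taylor (c : ℂ) (f : Polynomial ℂ) : f.comp (X - C c) = taylor (-c) f := by
  rw [taylor_apply, map_neg, sub_eq_add_neg]

lemma hasseDeriv_top (f : Polynomial ℂ) :
    Polynomial.hasseDeriv f.natDegree f = C f.leadingCoeff := by
  have h0 : (Polynomial.hasseDeriv f.natDegree f).natDegree ≤ 0 := by
    have := Polynomial.natDegree_hasseDeriv_le f f.natDegree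
    omega
  conv_lhs => rw [Polynomial.eq_C_of_natDegree_le_zero h0]
  rw [Polynomial.hasseDeriv_coeff]
  norm_num

lemma Tpoly_coeff_top (c u : ℂ) (f : Polynomial ℂ) :
    (Tpoly c u f).coeff f.natDegree = (1 + u) * f.leadingCoeff := by
  rw [Tpoly, coeff_add, coeff_C_mul, comp_add_eq_taylor, comp_sub_eq_taylor,
    Polynomial.taylor_coeff, Polynomial.taylor_coeff, hasseDeriv_top]
  simp
  ring

lemma Tpoly_coeff_pred (c u : ℂ) (f : Polynomial ℂ) (hd : 1 ≤ f.natDegree) :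
    (Tpoly c u f).coeff (f.natDegree - 1)
      = (1 + u) * f.coeff (f.natDegree - 1) + (1 - u) * ((f.natDegree : ℂ) * f.leadingCoeff * c) := by
  set d := f.natDegree with hdd
  set g := Polynomial.hasseDeriv (d - 1) f with hg
  have hgdeg : g.natDegree ≤ 1 := by
    rw [hg]
    have := Polynomial.natDegree_hasseDeriv_le f (d - 1)
    omega
  have hrep : g = C (g.coeff 1) * X + C (g.coeff 0) :=
    Polynomial.eq_X_add_C_of_natDegree_le_one hgdeg
  have hg1 : g.coeff 1 = (d : ℂ) * f.leadingCoeff := by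
    rw [hg, Polynomial.hasseDeriv_coeff]
    have h1 : 1 + (d - 1) = d := by omega
    rw [h1]
    have h2 : d.choose (d - 1) = d := by
      rw [Nat.choose_symm hd, Nat.choose_one_right]
    rw [h2, Polynomial.leadingCoeff]
  have hg0 : g.coeff 0 = f.coeff (d - 1) := by
    rw [hg, Polynomial.hasseDeriv_coeff]
    simp
  rw [Tpoly, coeff_add, coeff_C_mul, comp_add_eq_taylor, comp_sub_eq_taylor,
    Polynomial.taylor_coeff, Polynomial.taylor_coeff, ← hg]
  rw [hrep]
  simp only [eval_add, eval_mul, eval_C, eval_X]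
  rw [hg1, hg0]
  ring


lemma Tpoly_ne_zero_of_ne (c : ℂ) {u : ℂ} (hu : u ≠ -1) {f : Polynomial ℂ} (hf : f ≠ 0) :
    Tpoly c u f ≠ 0 := by
  intro h0
  have := Tpoly_coeff_top c u f
  rw [h0, Polynomial.coeff_zero] at this
  have h1 : (1 : ℂ) + u ≠ 0 := fun h => hu (by linear_combination h)
  exact (mul_ne_zero h1 (Polynomial.leadingCoeff_ne_zero.2 hf)) this.symm

lemma Tpoly_ne_zero_deg {c : ℂ} (hc : c ≠ 0) {f : Polynomial ℂ} (hf : f ≠ 0)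
    (hd : 1 ≤ f.natDegree) (u : ℂ) :
    Tpoly c u f ≠ 0 ∧ f.natDegree - 1 ≤ (Tpoly c u f).natDegree := by
  rcases eq_or_ne u (-1) with rfl | hu
  · have hco := Tpoly_coeff_pred c (-1) f hd
    have hne : (Tpoly c (-1) f).coeff (f.natDegree - 1) ≠ 0 := by
      rw [hco]
      have hlc := Polynomial.leadingCoeff_ne_zero.2 hf
      have hdne : (f.natDegree : ℂ) ≠ 0 := by
        have : f.natDegree ≠ 0 := by omega
        exact_mod_cast this
      intro h
      have h2 : (2 : ℂ) * ((f.natDegree : ℂ) * f.leadingCoeff * c) = 0 := by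
        linear_combination h
      rcases mul_eq_zero.1 h2 with h3 | h3
      · norm_num at h3
      rcases mul_eq_zero.1 h3 with h4 | h4
      · rcases mul_eq_zero.1 h4 with h5 | h5
        · exact hdne h5
        · exact hlc h5
      · exact hc h4
    exact ⟨fun h0 => hne (by rw [h0, Polynomial.coeff_zero]),
      Polynomial.le_natDegree_of_ne_zero hne⟩
  · have hne : (Tpoly c u f).coeff f.natDegree ≠ 0 := by
      rw [Tpoly_coeff_top]
      exact mul_ne_zero (fun h => hu (by linear_combination h)) (Polynomial.leadingCoeff_ne_zero.2 hf)
    exact ⟨fun h0 => hne (by rw [h0, Polynomial.coeff_zero]),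
      le_trans (by omega) (Polynomial.le_natDegree_of_ne_zero hne)⟩

lemma im_add_I_mul (ρ : ℂ) (b : ℝ) : (ρ + I * b).im = ρ.im + b := by simp
lemma im_sub_I_mul (ρ : ℂ) (b : ℝ) : (ρ - I * b).im = ρ.im - b := by simp

lemma Tpoly_roots_le {f : Polynomial ℂ} (hf : f ≠ 0) (hd : 1 ≤ f.natDegree)
    (hroots : ∀ ρ : ℂ, f.eval ρ = 0 → ρ.im ≤ 0) {b : ℝ} (hb : 0 < b) {u : ℂ}
    (hu : ‖u‖ ≤ 1) :
    ∀ ρ : ℂ, (Tpoly (I * b) u f).eval ρ = 0 → ρ.im ≤ 0 := by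
  intro ρ h0
  by_contra hgt
  push_neg at hgt
  rw [Tpoly_eval] at h0
  have h1 : f.eval (ρ + I * b) = -(u * f.eval (ρ - I * b)) := by linear_combination h0
  have h2 : ‖f.eval (ρ + I * b)‖ ≤ ‖f.eval (ρ - I * b)‖ := by
    rw [h1, norm_neg, norm_mul]
    calc ‖u‖ * ‖f.eval (ρ - I * b)‖
        ≤ 1 * ‖f.eval (ρ - I * b)‖ :=
          mul_le_mul_of_nonneg_right hu (norm_nonneg _)
      _ = _ := one_mul _
  exact absurd (lt_of_le_of_lt h2 (abs_eval_lt f hf hd hroots ρ hgt hb)) (lt_irrefl _)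

lemma Tpoly_roots_lt {f : Polynomial ℂ} (hf : f ≠ 0)
    (hroots : ∀ ρ : ℂ, f.eval ρ = 0 → ρ.im ≤ 0) {b : ℝ} (hb : 0 < b) {u : ℂ}
    (hu : ‖u‖ < 1) :
    ∀ ρ : ℂ, (Tpoly (I * b) u f).eval ρ = 0 → ρ.im < 0 := by
  intro ρ h0
  by_contra hge
  push_neg at hge
  rw [Tpoly_eval] at h0
  have hne : f.eval (ρ + I * b) ≠ 0 := by
    intro h
    have := hroots _ h
    rw [im_add_I_mul] at this
    linarith
  have h1 : f.eval (ρ + I * b) = -(u * f.eval (ρ - I * b)) := by linear_combination h0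
  have h2 : ‖f.eval (ρ + I * b)‖ < ‖f.eval (ρ + I * b)‖ := by
    conv_lhs => rw [h1]
    rw [norm_neg, norm_mul]
    calc ‖u‖ * ‖f.eval (ρ - I * b)‖
        ≤ ‖u‖ * ‖f.eval (ρ + I * b)‖ :=
          mul_le_mul_of_nonneg_left (abs_eval_le f hroots ρ hge hb) (norm_nonneg _)
      _ < 1 * ‖f.eval (ρ + I * b)‖ :=
          mul_lt_mul_of_pos_right hu (norm_pos_iff.2 hne)
      _ = _ := one_mul _
  exact absurd h2 (lt_irrefl _)

noncomputable def FF {n : ℕ} (K : Finset (Fin n)) (f : Polynomial ℂ) (a : Fin n → ℝ)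
    (u : Fin n → ℂ) (s : ℂ) : ℂ :=
  ∑ S ∈ K.powerset,
    f.eval (s - I * (∑ k ∈ K \ S, (a k : ℂ)) + I * (∑ ℓ ∈ S, (a ℓ : ℂ))) * ∏ k ∈ K \ S, u k

lemma FF_empty {n : ℕ} (f : Polynomial ℂ) (a : Fin n → ℝ) (u : Fin n → ℂ) (s : ℂ) :
    FF ∅ f a u s = f.eval s := by
  simp [FF]

lemma FF_insert {n : ℕ} {j : Fin n} {K : Finset (Fin n)} (hj : j ∉ K)
    (f : Polynomial ℂ) (a : Fin n → ℝ) (u : Fin n → ℂ) (s : ℂ) :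
    FF (insert j K) f a u s = FF K (Tpoly (I * a j) (u j) f) a u s := by
  unfold FF
  rw [Finset.sum_powerset_insert hj, ← Finset.sum_add_distrib]
  apply Finset.sum_congr rfl
  intro S hS
  rw [Finset.mem_powerset] at hS
  have hjS : j ∉ S := fun h => hj (hS h)
  have h1 : (insert j K) \ S = insert j (K \ S) := by
    ext x
    simp only [Finset.mem_sdiff, Finset.mem_insert]
    constructor
    · rintro ⟨h | h, hx⟩
      · exact Or.inl h
      · exact Or.inr ⟨h, hx⟩
    · rintro (rfl | ⟨h, hx⟩)
      · exact ⟨Or.inl rfl, hjS⟩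
      · exact ⟨Or.inr h, hx⟩
  have h2 : (insert j K) \ (insert j S) = K \ S := by
    ext x
    simp only [Finset.mem_sdiff, Finset.mem_insert]
    constructor
    · rintro ⟨h | h, hx⟩
      · exact absurd (Or.inl h) hx
      · push_neg at hx
        exact ⟨h, hx.2⟩
    · rintro ⟨h, hx⟩
      have hxj : x ≠ j := fun he => hj (he ▸ h)
      exact ⟨Or.inr h, by push_neg; exact ⟨hxj, hx⟩⟩
  have hjKS : j ∉ K \ S := fun h => hj (Finset.mem_sdiff.1 h).1
  rw [h1, h2, Finset.sum_insert hjKS, Finset.sum_insert hjS, Finset.prod_insert hjKS,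
    Tpoly_eval]
  have e1 : s - I * ((a j : ℂ) + ∑ k ∈ K \ S, (a k : ℂ)) + I * (∑ ℓ ∈ S, (a ℓ : ℂ))
      = (s - I * (∑ k ∈ K \ S, (a k : ℂ)) + I * (∑ ℓ ∈ S, (a ℓ : ℂ))) - I * a j := by ring
  have e2 : s - I * (∑ k ∈ K \ S, (a k : ℂ)) + I * ((a j : ℂ) + ∑ ℓ ∈ S, (a ℓ : ℂ))
      = (s - I * (∑ k ∈ K \ S, (a k : ℂ)) + I * (∑ ℓ ∈ S, (a ℓ : ℂ))) + I * a j := by ring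
  rw [e1, e2]
  ring

lemma keyA {n : ℕ} (a : Fin n → ℝ) (u : Fin n → ℂ) (ha : ∀ k, 0 < a k)
    (hu : ∀ k, ‖u k‖ ≤ 1) (K : Finset (Fin n)) :
    ∀ (f : Polynomial ℂ), f ≠ 0 → (∀ ρ : ℂ, f.eval ρ = 0 → ρ.im ≤ 0) →
      K.card ≤ f.natDegree → ∀ s : ℂ, 0 < s.im → FF K f a u s ≠ 0 := by
  induction K using Finset.induction_on with
  | empty =>
    intro f hf hr _ s hs
    rw [FF_empty]
    intro h
    linarith [hr s h]
  | insert j K hj ih =>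
    intro f hf hr hcard s hs
    rw [Finset.card_insert_of_notMem hj] at hcard
    have hd1 : 1 ≤ f.natDegree := by omega
    have hc : I * (a j : ℂ) ≠ 0 :=
      mul_ne_zero I_ne_zero (Complex.ofReal_ne_zero.2 (ne_of_gt (ha j)))
    obtain ⟨hT0, hTdeg⟩ := Tpoly_ne_zero_deg hc hf hd1 (u j)
    rw [FF_insert hj]
    exact ih _ hT0 (Tpoly_roots_le hf hd1 hr (ha j) (hu j)) (by omega) s hs

lemma keyB {n : ℕ} (a : Fin n → ℝ) (u : Fin n → ℂ) (ha : ∀ k, 0 < a k)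
    (hu : ∀ k, ‖u k‖ < 1) (K : Finset (Fin n)) :
    ∀ (f : Polynomial ℂ), f ≠ 0 → (∀ ρ : ℂ, f.eval ρ = 0 → ρ.im < 0) →
      ∀ s : ℂ, 0 ≤ s.im → FF K f a u s ≠ 0 := by
  induction K using Finset.induction_on with
  | empty =>
    intro f hf hr s hs
    rw [FF_empty]
    intro h
    linarith [hr s h]
  | insert j K hj ih =>
    intro f hf hr s hs
    have huj : u j ≠ -1 := by
      intro h
      have := hu j
      rw [h] at this
      simp at this
    rw [FF_insert hj]
    exact ih _ (Tpoly_ne_zero_of_ne _ huj hf)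
      (Tpoly_roots_lt hf (fun ρ h => le_of_lt (hr ρ h)) (ha j) (hu j)) s hs

theorem Hn_shifted_zero_locations (n : ℕ) (hn : 1 ≤ n) (G : Polynomial ℝ)
    (hroots : ∀ z : ℂ, (G.map (algebraMap ℝ ℂ)).eval z = 0 → z.im = 0)
    (hdeg : n ≤ G.natDegree)
    (A : ℝ) (hA : 0 < A)
    (a : Fin n → ℝ) (ha : ∀ k, 0 < a k)
    (ω : Fin n → Polynomial ℂ)
    (hHBzeros : ∀ k, ∀ z : ℂ, (ω k).eval z = 0 → 0 < z.im)
    (hHBineq : ∀ k, ∀ z : ℂ, 0 < z.im →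
      ‖(ω k).eval z‖
        < ‖starRingEnd ℂ ((ω k).eval (starRingEnd ℂ z))‖) :
    let H : ℂ → ℂ → ℂ := fun s z => ∑ S : Finset (Fin n),
        (G.map (algebraMap ℝ ℂ)).eval
          (s - I * (∑ k ∈ Sᶜ, (a k : ℂ)) + I * (∑ ℓ ∈ S, (a ℓ : ℂ)))
        * (∏ k ∈ Sᶜ, starRingEnd ℂ ((ω k).eval (starRingEnd ℂ z)))
        * (∏ ℓ ∈ S, (ω ℓ).eval z)
    (∀ z : ℂ, H (I * A) z = 0 → 0 < z.im) ∧
    (∀ z : ℂ, H (-(I * A)) z = 0 → z.im < 0) ∧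
    (∀ z : ℂ, H 0 z = 0 → z.im = 0) := by
  intro H
  set f : Polynomial ℂ := G.map (algebraMap ℝ ℂ) with hfdef
  have hG0 : G ≠ 0 := by
    intro h
    rw [h, Polynomial.natDegree_zero] at hdeg
    omega
  have hf0 : f ≠ 0 := (Polynomial.map_ne_zero_iff (algebraMap ℝ ℂ).injective).2 hG0
  have hfdeg : n ≤ f.natDegree := by
    rw [hfdef, Polynomial.natDegree_map]
    exact hdeg
  have hfroots : ∀ ρ : ℂ, f.eval ρ = 0 → ρ.im ≤ 0 := fun ρ h => le_of_eq (hroots ρ h)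
  have hevalconj : ∀ w : ℂ, f.eval ((starRingEnd ℂ) w) = (starRingEnd ℂ) (f.eval w) := by
    intro w
    rw [hfdef, Polynomial.eval_map, Polynomial.eval_map, ← Polynomial.aeval_def,
      ← Polynomial.aeval_def, Polynomial.aeval_conj]
  have hkey : ∀ (s z : ℂ), (∀ k, (ω k).eval z ≠ 0) → H s z =
      (∏ k, (ω k).eval z) * FF Finset.univ f a
        (fun k => (starRingEnd ℂ) ((ω k).eval ((starRingEnd ℂ) z)) / (ω k).eval z) s := by
    intro s z hω
    simp only [H]
    unfold FF
    rw [Finset.powerset_univ, Finset.mul_sum]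
    apply Finset.sum_congr rfl
    intro S _
    rw [← Finset.compl_eq_univ_sdiff]
    have hc : ∀ k ∈ Sᶜ, (starRingEnd ℂ) ((ω k).eval ((starRingEnd ℂ) z))
        = ((starRingEnd ℂ) ((ω k).eval ((starRingEnd ℂ) z)) / (ω k).eval z) * (ω k).eval z :=
      fun k _ => (div_mul_cancel₀ _ (hω k)).symm
    rw [Finset.prod_congr rfl hc, Finset.prod_mul_distrib,
      ← Finset.prod_mul_prod_compl S (fun k => (ω k).eval z)]
    ring
  have hconj : ∀ s z : ℂ, H ((starRingEnd ℂ) s) z = (starRingEnd ℂ) (H s ((starRingEnd ℂ) z)) := by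
    intro s z
    simp only [H]
    rw [map_sum]
    refine Eq.symm (Fintype.sum_bijective compl (Function.Involutive.bijective compl_involutive) _ _ ?_)
    intro S
    rw [map_mul, map_mul, map_prod, map_prod, ← hevalconj]
    simp only [Complex.conj_conj, compl_compl]
    have harg : (starRingEnd ℂ) (s - I * (∑ k ∈ Sᶜ, (a k : ℂ)) + I * (∑ ℓ ∈ S, (a ℓ : ℂ)))
        = (starRingEnd ℂ) s - I * (∑ k ∈ S, (a k : ℂ)) + I * (∑ ℓ ∈ Sᶜ, (a ℓ : ℂ)) := by
      rw [map_add, map_sub, map_mul, map_mul, map_sum, map_sum]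
      simp only [Complex.conj_ofReal, Complex.conj_I]
      ring
    rw [harg]
    ring
  have part1 : ∀ z : ℂ, H (I * A) z = 0 → 0 < z.im := by
    intro z hz
    by_contra hle0
    push_neg at hle0
    have hω : ∀ k, (ω k).eval z ≠ 0 := fun k h => by linarith [hHBzeros k z h]
    have hu : ∀ k, ‖(starRingEnd ℂ) ((ω k).eval ((starRingEnd ℂ) z)) / (ω k).eval z‖ ≤ 1 := by
      intro k
      rw [norm_div, Complex.norm_conj, div_le_one (norm_pos_iff.2 (hω k))]
      rcases lt_or_eq_of_le hle0 with hlt | heq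
      · have himz : 0 < ((starRingEnd ℂ) z).im := by rw [Complex.conj_im]; linarith
        have h2 := hHBineq k ((starRingEnd ℂ) z) himz
        simp only [Complex.conj_conj, Complex.norm_conj] at h2
        exact h2.le
      · rw [Complex.conj_eq_iff_im.2 heq]
    rw [hkey (I * A) z hω] at hz
    rcases mul_eq_zero.1 hz with h | h
    · exact (Finset.prod_ne_zero_iff.2 fun k _ => hω k) h
    · refine keyA a _ ha hu Finset.univ f hf0 hfroots ?_ (I * A) ?_ h
      · rw [Finset.card_univ, Fintype.card_fin]; exact hfdeg
      · simp only [Complex.mul_im, Complex.I_re, Complex.I_im, Complex.ofReal_re,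
          Complex.ofReal_im, one_mul, zero_mul, mul_zero, add_zero, zero_add]
        exact hA
  have part3neg : ∀ z : ℂ, z.im < 0 → H 0 z ≠ 0 := by
    intro z hzlt hz
    have hω : ∀ k, (ω k).eval z ≠ 0 := fun k h => by linarith [hHBzeros k z h]
    have hu : ∀ k, ‖(starRingEnd ℂ) ((ω k).eval ((starRingEnd ℂ) z)) / (ω k).eval z‖ < 1 := by
      intro k
      rw [norm_div, Complex.norm_conj, div_lt_one (norm_pos_iff.2 (hω k))]
      have himz : 0 < ((starRingEnd ℂ) z).im := by rw [Complex.conj_im]; linarith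
      have h2 := hHBineq k ((starRingEnd ℂ) z) himz
      simp only [Complex.conj_conj, Complex.norm_conj] at h2
      exact h2
    rw [hkey 0 z hω] at hz
    rcases mul_eq_zero.1 hz with h | h
    · exact (Finset.prod_ne_zero_iff.2 fun k _ => hω k) h
    · have j : Fin n := ⟨0, by omega⟩
      have huniv : (Finset.univ : Finset (Fin n)) = insert j (Finset.univ.erase j) :=
        (Finset.insert_erase (Finset.mem_univ j)).symm
      rw [huniv, FF_insert (Finset.notMem_erase j Finset.univ)] at h
      have huj : (starRingEnd ℂ) ((ω j).eval ((starRingEnd ℂ) z)) / (ω j).eval z ≠ -1 := by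
        intro he
        have h3 := hu j
        rw [he] at h3
        simp at h3
      exact keyB a _ ha hu (Finset.univ.erase j) _
        (Tpoly_ne_zero_of_ne _ huj hf0)
        (Tpoly_roots_lt hf0 hfroots (ha j) (hu j)) 0 (by simp) h
  have part2 : ∀ z : ℂ, H (-(I * A)) z = 0 → z.im < 0 := by
    intro z hz
    have hc : (starRingEnd ℂ) (I * (A : ℂ)) = -(I * A) := by simp
    have h1 : H ((starRingEnd ℂ) (I * (A : ℂ))) z = 0 := by rw [hc]; exact hz
    rw [hconj] at h1
    have h2 : H (I * A) ((starRingEnd ℂ) z) = 0 := star_eq_zero.1 h1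
    have h3 := part1 _ h2
    rw [Complex.conj_im] at h3
    linarith
  refine ⟨part1, part2, ?_⟩
  intro z hz
  by_contra hne
  rcases lt_or_gt_of_ne hne with hlt | hgt
  · exact part3neg z hlt hz
  · have h0 : H ((starRingEnd ℂ) 0) z = 0 := by rw [map_zero]; exact hz
    rw [hconj] at h0
    have h1 : H 0 ((starRingEnd ℂ) z) = 0 := star_eq_zero.1 h0
    exact part3neg _ (by rw [Complex.conj_im]; linarith) h1
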